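/- arXiv:1805.08942 — 3 statements merged into one kernel-verified Lean document; each statement's English description precedes it below -/
import Mathlib

section
/- For all integers i ≥ 1 and j ≥ 1, the coefficient m(i,j) is nonzero if and only if ⌊(i+2)/3⌋ ≤ j ≤ i. -/
/-- The matrix `m(i,j)` of Hirschhorn: `m(i,j) = 0` whenever `i = 0` or `j = 0`
(corresponding to nonpositive indices), `m(1,1) = 9`, `m(2,1) = 6`, `m(3,1) = 1`,
`m(i,1) = 0` for `i ≥ 4`, and for `j ≥ 2`,
`m(i,j) = 27·m(i-1,j-1) + 9·m(i-2,j-1) + m(i-3,j-1)`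
(truncated subtraction correctly yields the prescribed value `0` at nonpositive
first arguments). -/
def mCoef : ℕ → ℕ → ℤ
  | _, 0 => 0
  | 0, _ => 0
  | 1, 1 => 9
  | 2, 1 => 6
  | 3, 1 => 1
  | _ + 4, 1 => 0
  | i, j + 2 => 27 * mCoef (i - 1) (j + 1) + 9 * mCoef (i - 2) (j + 1) + mCoef (i - 3) (j + 1)

lemma mCoef_spec : ∀ j i, 0 ≤ mCoef i j ∧
    (mCoef i j ≠ 0 ↔ 1 ≤ i ∧ (i + 2) / 3 ≤ j ∧ j ≤ i) := by
  intro j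
  induction j with
  | zero =>
    intro i
    have h : mCoef i 0 = 0 := by cases i <;> simp [mCoef]
    rw [h]; simp
  | succ j ih =>
    cases j with
    | zero =>
      intro i
      match i with
      | 0 => simp [mCoef]
      | 1 => norm_num [mCoef]
      | 2 => norm_num [mCoef]
      | 3 => norm_num [mCoef]
      | n + 4 => simp [mCoef]; omega
    | succ k =>
      intro i
      match i with
      | 0 => simp [mCoef]
      | n + 1 =>
        obtain ⟨ha0, ha⟩ := ih n
        obtain ⟨hb0, hb⟩ := ih (n - 1)
        obtain ⟨hc0, hc⟩ := ih (n - 2)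
        have heq : mCoef (n + 1) (k + 2) =
            27 * mCoef n (k + 1) + 9 * mCoef (n - 1) (k + 1) + mCoef (n - 2) (k + 1) := by
          show mCoef (n + 1) (k + 2) = _
          rw [mCoef]
          · have h1 : n + 1 - 2 = n - 1 := by omega
            have h2 : n + 1 - 3 = n - 2 := by omega
            have h0 : n + 1 - 1 = n := by omega
            rw [h0, h1, h2]
          · omega
        rw [heq]
        constructor
        · positivity
        · have hS : 27 * mCoef n (k + 1) + 9 * mCoef (n - 1) (k + 1) + mCoef (n - 2) (k + 1) ≠ 0
              ↔ (mCoef n (k + 1) ≠ 0 ∨ mCoef (n - 1) (k + 1) ≠ 0 ∨ mCoef (n - 2) (k + 1) ≠ 0) := by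
            constructor
            · intro h
              by_contra hn
              push_neg at hn
              obtain ⟨h1, h2, h3⟩ := hn
              rw [h1, h2, h3] at h
              simp at h
            · rintro (h | h | h) hz <;> apply h <;>
                [exact le_antisymm (by linarith) ha0;
                 exact le_antisymm (by linarith) hb0;
                 exact le_antisymm (by linarith) hc0]
          rw [hS, ha, hb, hc]
          omega

/-- `m(i,j) ≠ 0` if and only if `⌊(i+2)/3⌋ ≤ j ≤ i`, for `i, j ≥ 1`. -/
theorem mCoef_ne_zero_iff (i j : ℕ) (hi : 1 ≤ i) (hj : 1 ≤ j) :
    mCoef i j ≠ 0 ↔ (i + 2) / 3 ≤ j ∧ j ≤ i := by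
  have := (mCoef_spec j i).2
  rw [this]
  omega
end

section
/- For all integers i ≥ 1 and j ≥ 1, the 3-adic valuation of m(i,j) satisfies ν_3(m(i,j)) ≥ ⌊(9j−3i−1)/2⌋; equivalently, whenever 9j−3i−1 ≥ 0, the integer m(i,j) is divisible by 3^{⌊(9j−3i−1)/2⌋}. -/
lemma mCoef_rec (i j : ℕ) (h : 1 ≤ i) :
    mCoef i (j+2) = 27 * mCoef (i - 1) (j + 1) + 9 * mCoef (i - 2) (j + 1)
      + mCoef (i - 3) (j + 1) := by
  obtain ⟨k, rfl⟩ := Nat.exists_eq_add_of_le h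
  simp [mCoef]

lemma mCoef_zero (j : ℕ) : mCoef 0 j = 0 := by cases j <;> simp [mCoef]

lemma mCoef_aux : ∀ j i, (3:ℤ) ^ ((9 * j - 3 * i - 1) / 2) ∣ mCoef i j := by
  intro j
  induction j with
  | zero => intro i; simp [mCoef]
  | succ j ih =>
    intro i
    match j, i with
    | 0, 0 => simp [mCoef]
    | 0, 1 => norm_num [mCoef]
    | 0, 2 => norm_num [mCoef]
    | 0, 3 => norm_num [mCoef]
    | 0, (i+4) => simp [mCoef]
    | (j+1), 0 => simp [mCoef_zero]
    | (j+1), 1 =>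
      rw [mCoef_rec _ _ (by omega)]
      norm_num [mCoef_zero]
    | (j+1), 2 =>
      rw [mCoef_rec _ _ (by omega)]
      have h1 : (3:ℤ) ^ ((9 * (j+2) - 3 * 2 - 1) / 2) ∣ 27 * mCoef 1 (j+1) := by
        calc (3:ℤ) ^ ((9 * (j+2) - 3 * 2 - 1) / 2)
            ∣ 3 ^ ((9 * (j+1) - 3 * 1 - 1) / 2 + 3) := pow_dvd_pow 3 (by omega)
          _ = 27 * 3 ^ ((9 * (j+1) - 3 * 1 - 1) / 2) := by ring
          _ ∣ 27 * mCoef 1 (j+1) := mul_dvd_mul_left _ (ih _)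
      simpa [mCoef_zero] using h1
    | (j+1), (i+3) =>
      rw [mCoef_rec _ _ (by omega)]
      have h1 : (3:ℤ) ^ ((9 * (j+2) - 3 * (i+3) - 1) / 2) ∣
          27 * mCoef (i+3-1) (j+1) := by
        calc (3:ℤ) ^ ((9 * (j+2) - 3 * (i+3) - 1) / 2)
            ∣ 3 ^ ((9 * (j+1) - 3 * (i+3-1) - 1) / 2 + 3) := pow_dvd_pow 3 (by omega)
          _ = 27 * 3 ^ ((9 * (j+1) - 3 * (i+3-1) - 1) / 2) := by ring
          _ ∣ 27 * mCoef (i+3-1) (j+1) := mul_dvd_mul_left _ (ih _)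
      have h2 : (3:ℤ) ^ ((9 * (j+2) - 3 * (i+3) - 1) / 2) ∣
          9 * mCoef (i+3-2) (j+1) := by
        calc (3:ℤ) ^ ((9 * (j+2) - 3 * (i+3) - 1) / 2)
            ∣ 3 ^ ((9 * (j+1) - 3 * (i+3-2) - 1) / 2 + 2) := pow_dvd_pow 3 (by omega)
          _ = 9 * 3 ^ ((9 * (j+1) - 3 * (i+3-2) - 1) / 2) := by ring
          _ ∣ 9 * mCoef (i+3-2) (j+1) := mul_dvd_mul_left _ (ih _)
      have h3 : (3:ℤ) ^ ((9 * (j+2) - 3 * (i+3) - 1) / 2) ∣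
          mCoef (i+3-3) (j+1) :=
        dvd_trans (pow_dvd_pow 3 (by omega)) (ih (i+3-3))
      exact dvd_add (dvd_add h1 h2) h3

/-- `ν₃(m(i,j)) ≥ ⌊(9j - 3i - 1)/2⌋`: whenever `9j - 3i - 1 ≥ 0` (i.e. `3i + 1 ≤ 9j`),
the integer `m(i,j)` is divisible by `3 ^ ⌊(9j - 3i - 1)/2⌋` (the floor here is the
natural-number division `(9j - 3i - 1)/2`, the subtractions being nonnegative); when
`9j - 3i - 1 < 0` the claimed bound on the 3-adic valuation holds trivially. -/
theorem mCoef_three_adic_bound (i j : ℕ) (hi : 1 ≤ i) (hj : 1 ≤ j)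
    (h : 3 * i + 1 ≤ 9 * j) :
    (3 : ℤ) ^ ((9 * j - 3 * i - 1) / 2) ∣ mCoef i j := mCoef_aux j i
end

section
/- For all integers j ≥ 1 and k ≥ 1: ν_3(a(2j−1,k)) ≥ 2j−1+δ_{k,1}+⌊(9k−10)/2⌋ and ν_3(a(2j,k)) ≥ 2j+1+δ_{k,1}+⌊(9k−10)/2⌋, where δ_{k,1} equals 1 if k = 1 and 0 otherwise. Equivalently, 3 raised to each of these exponents (which are nonnegative for all k ≥ 1) divides a(2j−1,k) and a(2j,k) respectively. -/
/-- The matrix `a(j,k)`: `a(1,1) = 6`, `a(1,2) = 243`, `a(1,k) = 0` for `k ≥ 3`, and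
`a(j+1,k) = ∑_{i≥1} a(j,i)·m(4i,i+k)` if `j` is odd, while
`a(j+1,k) = ∑_{i≥1} a(j,i)·m(4i+2,i+k)` if `j` is even.  All terms of these sums with
`i > 3k + 3` vanish (since `m(i',j') = 0` unless `⌊(i'+2)/3⌋ ≤ j'`), so the sums may be
truncated at `i = 3k + 3`. -/
def aCoef : ℕ → ℕ → ℤ
  | 1, 1 => 6
  | 1, 2 => 243
  | j + 2, k =>
      if (j + 1) % 2 = 1 then
        ∑ i ∈ Finset.Icc 1 (3 * k + 3), aCoef (j + 1) i * mCoef (4 * i) (i + k)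
      else
        ∑ i ∈ Finset.Icc 1 (3 * k + 3), aCoef (j + 1) i * mCoef (4 * i + 2) (i + k)
  | _, _ => 0

lemma pow3_mul_dvd {v w n : ℕ} {a b : ℤ} (ha : (3:ℤ)^v ∣ a) (hb : (3:ℤ)^w ∣ b)
    (h : n ≤ v + w) : (3:ℤ)^n ∣ a * b :=
  (pow_dvd_pow 3 h).trans ((pow_add (3:ℤ) v w) ▸ mul_dvd_mul ha hb)

lemma mCoef_dvd : ∀ j i, (3:ℤ)^((9*(j+1) - (3*i+1))/2) ∣ mCoef i (j+1) := by
  intro j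
  induction j with
  | zero =>
    intro i
    match i with
    | 0 => simp [mCoef]
    | 1 => norm_num [mCoef]
    | 2 => norm_num [mCoef]
    | 3 => norm_num [mCoef]
    | i + 4 => simp [mCoef]
  | succ j ih =>
    intro i
    match i with
    | 0 => simp [mCoef_zero]
    | i' + 1 =>
      have key : ∀ b : ℤ, ∀ w : ℕ, (3:ℤ)^w ∣ b →
          (9*(j+1+1) - (3*(i'+1)+1))/2 ≤ w → (3:ℤ)^((9*(j+1+1) - (3*(i'+1)+1))/2) ∣ b :=
        fun b w hb hw => (pow_dvd_pow 3 hw).trans hb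
      rw [show j+1+1 = j+2 from rfl, mCoef]
      refine dvd_add (dvd_add ?_ ?_) ?_
      · -- 27 * mCoef i' (j+1)
        have h := ih i'
        refine pow3_mul_dvd (v := 3) (by norm_num) h ?_
        omega
      · -- 9 * mCoef (i'-1) (j+1)
        match i' with
        | 0 => simp [mCoef_zero]
        | 1 => simp [mCoef_zero]
        | i'' + 2 =>
          have h := ih (i''+1)
          refine pow3_mul_dvd (v := 2) (by norm_num) h ?_
          omega
      · -- mCoef (i'-2) (j+1)
        match i' with
        | 0 => simp [mCoef_zero]
        | 1 => simp [mCoef_zero]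
        | 2 => simp [mCoef_zero]
        | i'' + 3 =>
          have h := ih (i''+1)
          exact (pow_dvd_pow 3 (by omega)).trans h
      · omega

def eE (k : ℕ) : ℕ := if k = 1 then 0 else (9*k-10)/2

lemma arith1 (i k : ℕ) (hi : 1 ≤ i) (hk : 1 ≤ k) :
    2 + eE k ≤ eE i + (9*(i+k) - (3*(4*i)+1))/2 := by
  unfold eE; split_ifs <;> omega

lemma arith2 (i k : ℕ) (hi : 1 ≤ i) (hk : 1 ≤ k) :
    eE k ≤ eE i + (9*(i+k) - (3*(4*i+2)+1))/2 := by
  unfold eE; split_ifs <;> omega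

lemma mCoef_dvd' (i' j' : ℕ) (hj : 1 ≤ j') :
    (3:ℤ)^((9*j' - (3*i'+1))/2) ∣ mCoef i' j' := by
  obtain ⟨j, rfl⟩ : ∃ j, j' = j + 1 := ⟨j'-1, by omega⟩
  exact mCoef_dvd j i'

lemma aCoef_main : ∀ j, 1 ≤ j → ∀ k, 1 ≤ k →
    ((3:ℤ)^(2*j-1 + eE k) ∣ aCoef (2*j-1) k ∧ (3:ℤ)^(2*j+1 + eE k) ∣ aCoef (2*j) k) := by
  intro j hj
  induction j, hj using Nat.le_induction with
  | base =>
    have h1 : ∀ k, 1 ≤ k → (3:ℤ)^(2*1-1 + eE k) ∣ aCoef (2*1-1) k := by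
      intro k hk
      match k with
      | 1 => show (3:ℤ)^(1+eE 1) ∣ aCoef 1 1; norm_num [aCoef, eE]
      | 2 => show (3:ℤ)^(1+eE 2) ∣ aCoef 1 2; norm_num [aCoef, eE]
      | k + 3 =>
        have : aCoef 1 (k+3) = 0 := by simp [aCoef]
        simp [this]
    intro k hk
    refine ⟨h1 k hk, ?_⟩
    show (3:ℤ)^(2*1+1 + eE k) ∣ aCoef (0+2) k
    rw [aCoef, if_pos (by norm_num)]
    refine Finset.dvd_sum ?_
    intro i hi
    rw [Finset.mem_Icc] at hi
    have hm := mCoef_dvd' (4*i) (i+k) (by omega)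
    exact pow3_mul_dvd (h1 i hi.1) hm (by have := arith1 i k hi.1 hk; omega)
  | succ j hj ih =>
    have h1 : ∀ k, 1 ≤ k → (3:ℤ)^(2*(j+1)-1 + eE k) ∣ aCoef (2*(j+1)-1) k := by
      intro k hk
      have e : 2*(j+1)-1 = (2*j-1)+2 := by omega
      rw [e, aCoef, if_neg (by omega)]
      refine Finset.dvd_sum ?_
      intro i hi
      rw [Finset.mem_Icc] at hi
      have ha : (3:ℤ)^(2*j+1 + eE i) ∣ aCoef (2*j-1+1) i := by
        have e2 : 2*j-1+1 = 2*j := by omega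
        rw [e2]; exact (ih i hi.1).2
      have hm := mCoef_dvd' (4*i+2) (i+k) (by omega)
      exact pow3_mul_dvd ha hm (by have := arith2 i k hi.1 hk; omega)
    intro k hk
    refine ⟨h1 k hk, ?_⟩
    have e : 2*(j+1) = (2*j)+2 := by omega
    rw [e, aCoef, if_pos (by omega)]
    refine Finset.dvd_sum ?_
    intro i hi
    rw [Finset.mem_Icc] at hi
    have ha : (3:ℤ)^(2*(j+1)-1 + eE i) ∣ aCoef (2*j+1) i := by
      have e2 : 2*(j+1)-1 = 2*j+1 := by omega
      rw [← e2]; exact h1 i hi.1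
    have hm := mCoef_dvd' (4*i) (i+k) (by omega)
    refine pow3_mul_dvd ha hm ?_
    have := arith1 i k hi.1 hk
    omega

/-- `ν₃(a(2j-1,k)) ≥ 2j - 1 + δ_{k,1} + ⌊(9k-10)/2⌋` and
`ν₃(a(2j,k)) ≥ 2j + 1 + δ_{k,1} + ⌊(9k-10)/2⌋` for `j, k ≥ 1`, stated as divisibility by
the corresponding powers of 3.  Here `δ_{k,1} + ⌊(9k-10)/2⌋` equals `0` when `k = 1`
(since `δ_{1,1} = 1` and `⌊-1/2⌋ = -1`) and equals `(9k-10)/2` in natural-number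
division when `k ≥ 2`, so both total exponents are nonnegative. -/
theorem aCoef_three_adic_bound (j k : ℕ) (hj : 1 ≤ j) (hk : 1 ≤ k) :
    (3 : ℤ) ^ (2 * j - 1 + (if k = 1 then 0 else (9 * k - 10) / 2)) ∣ aCoef (2 * j - 1) k ∧
    (3 : ℤ) ^ (2 * j + 1 + (if k = 1 then 0 else (9 * k - 10) / 2)) ∣ aCoef (2 * j) k := by
  have := aCoef_main j hj k hk
  simpa [eE] using this
end
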